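/- The area functional F(x¹, x²) = [(x₁¹x₂² − x₁²x₂¹)² + (x₁¹x₃² − x₁²x₃¹)² + (x₂¹x₃² − x₂²x₃¹)²]^(1/2) on pairs of vectors in ℝ³ is its own Legendre transform: at any point x where F is differentiable (i.e., where F(x) ≠ 0), letting y = F'(x), one has ⟨x, y⟩ − F(x) = F(y), where ⟨x,y⟩ = Σ_{n,k} x_n^k y_k^n and F(y) is the same expression applied to the 2×3 matrix y (via the corresponding three 2×2 minors). -/

import Mathlib

attribute [local instance] Matrix.normedAddCommGroup Matrix.normedSpace

/-- The three `2×2` minors (at indices `0, 1, 2`) of a `3×2` matrix. -/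
def minors32 (x : Matrix (Fin 3) (Fin 2) ℝ) : Fin 3 → ℝ :=
  ![x 1 0 * x 2 1 - x 1 1 * x 2 0,
    x 0 0 * x 2 1 - x 0 1 * x 2 0,
    x 0 0 * x 1 1 - x 0 1 * x 1 0]

namespace AreaAux

noncomputable def E (i : Fin 3) (j : Fin 2) : Matrix (Fin 3) (Fin 2) ℝ →L[ℝ] ℝ :=
  LinearMap.toContinuousLinearMap (Matrix.entryLinearMap ℝ ℝ i j)

lemma E_apply (i : Fin 3) (j : Fin 2) (z : Matrix (Fin 3) (Fin 2) ℝ) : E i j z = z i j := rfl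

lemma hasFDerivAt_entry (i : Fin 3) (j : Fin 2) (x : Matrix (Fin 3) (Fin 2) ℝ) :
    HasFDerivAt (fun z : Matrix (Fin 3) (Fin 2) ℝ => z i j) (E i j) x :=
  (E i j).hasFDerivAt

noncomputable def G (x : Matrix (Fin 3) (Fin 2) ℝ) : Matrix (Fin 3) (Fin 2) ℝ →L[ℝ] ℝ :=
  ((x 1 0 * x 2 1 - x 1 1 * x 2 0) •
      (x 1 0 • E 2 1 + x 2 1 • E 1 0 - (x 1 1 • E 2 0 + x 2 0 • E 1 1)) +
    (x 1 0 * x 2 1 - x 1 1 * x 2 0) •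
      (x 1 0 • E 2 1 + x 2 1 • E 1 0 - (x 1 1 • E 2 0 + x 2 0 • E 1 1)) +
    ((x 0 0 * x 2 1 - x 0 1 * x 2 0) •
      (x 0 0 • E 2 1 + x 2 1 • E 0 0 - (x 0 1 • E 2 0 + x 2 0 • E 0 1)) +
    (x 0 0 * x 2 1 - x 0 1 * x 2 0) •
      (x 0 0 • E 2 1 + x 2 1 • E 0 0 - (x 0 1 • E 2 0 + x 2 0 • E 0 1)))) +
  ((x 0 0 * x 1 1 - x 0 1 * x 1 0) •
      (x 0 0 • E 1 1 + x 1 1 • E 0 0 - (x 0 1 • E 1 0 + x 1 0 • E 0 1)) +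
    (x 0 0 * x 1 1 - x 0 1 * x 1 0) •
      (x 0 0 • E 1 1 + x 1 1 • E 0 0 - (x 0 1 • E 1 0 + x 1 0 • E 0 1)))

lemma hasFDerivAt_Q (x : Matrix (Fin 3) (Fin 2) ℝ) :
    HasFDerivAt (fun z : Matrix (Fin 3) (Fin 2) ℝ =>
      (z 1 0 * z 2 1 - z 1 1 * z 2 0) ^ 2 + (z 0 0 * z 2 1 - z 0 1 * z 2 0) ^ 2 +
        (z 0 0 * z 1 1 - z 0 1 * z 1 0) ^ 2) (G x) x := by
  have hm0 := ((hasFDerivAt_entry 1 0 x).mul (hasFDerivAt_entry 2 1 x)).sub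
    ((hasFDerivAt_entry 1 1 x).mul (hasFDerivAt_entry 2 0 x))
  have hm1 := ((hasFDerivAt_entry 0 0 x).mul (hasFDerivAt_entry 2 1 x)).sub
    ((hasFDerivAt_entry 0 1 x).mul (hasFDerivAt_entry 2 0 x))
  have hm2 := ((hasFDerivAt_entry 0 0 x).mul (hasFDerivAt_entry 1 1 x)).sub
    ((hasFDerivAt_entry 0 1 x).mul (hasFDerivAt_entry 1 0 x))
  have H := ((hm0.mul hm0).add (hm1.mul hm1)).add (hm2.mul hm2)
  simp only [pow_two]
  exact H

end AreaAux

/-- The area functional `F(x¹,x²) = (Δ₃² + Δ₂² + Δ₁²)^{1/2}` on pairs of vectors in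
`ℝ³` is its own Legendre transform: at any point `x` where `F(x) ≠ 0`, letting
`y = F'(x)` (a `2×3` matrix), one has `⟨x,y⟩ - F(x) = F(y)`, where `F(y)` is the same
expression applied to the three `2×2` minors of `y`. -/
theorem area_functional_self_dual
    (x : Matrix (Fin 3) (Fin 2) ℝ)
    (hx : Real.sqrt ((minors32 x 0) ^ 2 + (minors32 x 1) ^ 2 + (minors32 x 2) ^ 2) ≠ 0)
    (y : Matrix (Fin 2) (Fin 3) ℝ)
    (hy : ∀ k n, y k n =
      fderiv ℝ (fun z : Matrix (Fin 3) (Fin 2) ℝ =>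
          Real.sqrt ((minors32 z 0) ^ 2 + (minors32 z 1) ^ 2 + (minors32 z 2) ^ 2)) x
        (Matrix.single n k 1))
    (D : Fin 3 → ℝ)
    (hD1 : D 0 = y 0 1 * y 1 2 - y 1 1 * y 0 2)
    (hD2 : D 1 = y 0 0 * y 1 2 - y 1 0 * y 0 2)
    (hD3 : D 2 = y 0 0 * y 1 1 - y 1 0 * y 0 1) :
    (∑ n, ∑ k, x n k * y k n)
        - Real.sqrt ((minors32 x 0) ^ 2 + (minors32 x 1) ^ 2 + (minors32 x 2) ^ 2)
      = Real.sqrt ((D 0) ^ 2 + (D 1) ^ 2 + (D 2) ^ 2) := by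
  simp only [minors32, Matrix.cons_val_zero, Matrix.cons_val_one, Matrix.head_cons,
    Matrix.cons_val_two, Matrix.tail_cons] at hx hy ⊢
  have hq0 : (x 1 0 * x 2 1 - x 1 1 * x 2 0) ^ 2 + (x 0 0 * x 2 1 - x 0 1 * x 2 0) ^ 2 +
      (x 0 0 * x 1 1 - x 0 1 * x 1 0) ^ 2 ≠ 0 := by
    intro h; apply hx; rw [h, Real.sqrt_zero]
  have hsq : Real.sqrt ((x 1 0 * x 2 1 - x 1 1 * x 2 0) ^ 2 +
      (x 0 0 * x 2 1 - x 0 1 * x 2 0) ^ 2 + (x 0 0 * x 1 1 - x 0 1 * x 1 0) ^ 2) ^ 2 =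
      (x 1 0 * x 2 1 - x 1 1 * x 2 0) ^ 2 + (x 0 0 * x 2 1 - x 0 1 * x 2 0) ^ 2 +
      (x 0 0 * x 1 1 - x 0 1 * x 1 0) ^ 2 :=
    Real.sq_sqrt (by positivity)
  have hF := (AreaAux.hasFDerivAt_Q x).sqrt hq0
  have hF2 : fderiv ℝ (fun z : Matrix (Fin 3) (Fin 2) ℝ => Real.sqrt ((z 1 0 * z 2 1 - z 1 1 * z 2 0) ^ 2 + (z 0 0 * z 2 1 - z 0 1 * z 2 0) ^ 2 + (z 0 0 * z 1 1 - z 0 1 * z 1 0) ^ 2)) x = (1 / (2 * Real.sqrt ((x 1 0 * x 2 1 - x 1 1 * x 2 0) ^ 2 + (x 0 0 * x 2 1 - x 0 1 * x 2 0) ^ 2 + (x 0 0 * x 1 1 - x 0 1 * x 1 0) ^ 2))) • AreaAux.G x := hF.fderiv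
  have e00 : y 0 0 = ((x 0 0 * x 2 1 - x 0 1 * x 2 0) * x 2 1 +
      (x 0 0 * x 1 1 - x 0 1 * x 1 0) * x 1 1) /
      Real.sqrt ((x 1 0 * x 2 1 - x 1 1 * x 2 0) ^ 2 + (x 0 0 * x 2 1 - x 0 1 * x 2 0) ^ 2 +
        (x 0 0 * x 1 1 - x 0 1 * x 1 0) ^ 2) := by
    rw [hy 0 0, hF2]
    simp [AreaAux.G, AreaAux.E_apply, Matrix.single, Matrix.of_apply]
    ring
  have e01 : y 0 1 = ((x 1 0 * x 2 1 - x 1 1 * x 2 0) * x 2 1 -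
      (x 0 0 * x 1 1 - x 0 1 * x 1 0) * x 0 1) /
      Real.sqrt ((x 1 0 * x 2 1 - x 1 1 * x 2 0) ^ 2 + (x 0 0 * x 2 1 - x 0 1 * x 2 0) ^ 2 +
        (x 0 0 * x 1 1 - x 0 1 * x 1 0) ^ 2) := by
    rw [hy 0 1, hF2]
    simp [AreaAux.G, AreaAux.E_apply, Matrix.single, Matrix.of_apply]
    ring
  have e02 : y 0 2 = (-(x 1 0 * x 2 1 - x 1 1 * x 2 0) * x 1 1 -
      (x 0 0 * x 2 1 - x 0 1 * x 2 0) * x 0 1) /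
      Real.sqrt ((x 1 0 * x 2 1 - x 1 1 * x 2 0) ^ 2 + (x 0 0 * x 2 1 - x 0 1 * x 2 0) ^ 2 +
        (x 0 0 * x 1 1 - x 0 1 * x 1 0) ^ 2) := by
    rw [hy 0 2, hF2]
    simp [AreaAux.G, AreaAux.E_apply, Matrix.single, Matrix.of_apply]
    ring
  have e10 : y 1 0 = (-(x 0 0 * x 2 1 - x 0 1 * x 2 0) * x 2 0 -
      (x 0 0 * x 1 1 - x 0 1 * x 1 0) * x 1 0) /
      Real.sqrt ((x 1 0 * x 2 1 - x 1 1 * x 2 0) ^ 2 + (x 0 0 * x 2 1 - x 0 1 * x 2 0) ^ 2 +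
        (x 0 0 * x 1 1 - x 0 1 * x 1 0) ^ 2) := by
    rw [hy 1 0, hF2]
    simp [AreaAux.G, AreaAux.E_apply, Matrix.single, Matrix.of_apply]
    ring
  have e11 : y 1 1 = (-(x 1 0 * x 2 1 - x 1 1 * x 2 0) * x 2 0 +
      (x 0 0 * x 1 1 - x 0 1 * x 1 0) * x 0 0) /
      Real.sqrt ((x 1 0 * x 2 1 - x 1 1 * x 2 0) ^ 2 + (x 0 0 * x 2 1 - x 0 1 * x 2 0) ^ 2 +
        (x 0 0 * x 1 1 - x 0 1 * x 1 0) ^ 2) := by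
    rw [hy 1 1, hF2]
    simp [AreaAux.G, AreaAux.E_apply, Matrix.single, Matrix.of_apply]
    ring
  have e12 : y 1 2 = ((x 1 0 * x 2 1 - x 1 1 * x 2 0) * x 1 0 +
      (x 0 0 * x 2 1 - x 0 1 * x 2 0) * x 0 0) /
      Real.sqrt ((x 1 0 * x 2 1 - x 1 1 * x 2 0) ^ 2 + (x 0 0 * x 2 1 - x 0 1 * x 2 0) ^ 2 +
        (x 0 0 * x 1 1 - x 0 1 * x 1 0) ^ 2) := by
    rw [hy 1 2, hF2]
    simp [AreaAux.G, AreaAux.E_apply, Matrix.single, Matrix.of_apply]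
    ring
  have hd0 : D 0 = x 1 0 * x 2 1 - x 1 1 * x 2 0 := by
    rw [hD1, e01, e12, e11, e02]
    field_simp
    simp (disch := positivity) only [Real.sq_sqrt]
    rw [div_eq_iff (by contrapose! hq0; linear_combination hq0)]
    ring
  have hd1 : D 1 = x 0 0 * x 2 1 - x 0 1 * x 2 0 := by
    rw [hD2, e00, e12, e10, e02]
    field_simp
    simp (disch := positivity) only [Real.sq_sqrt]
    rw [div_eq_iff (by contrapose! hq0; linear_combination hq0)]
    ring
  have hd2 : D 2 = x 0 0 * x 1 1 - x 0 1 * x 1 0 := by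
    rw [hD3, e00, e11, e10, e01]
    field_simp
    simp (disch := positivity) only [Real.sq_sqrt]
    rw [div_eq_iff (by contrapose! hq0; linear_combination hq0)]
    ring
  rw [hd0, hd1, hd2, Fin.sum_univ_three]
  simp only [Fin.sum_univ_two]
  rw [e00, e01, e02, e10, e11, e12]
  field_simp
  simp (disch := positivity) only [Real.sq_sqrt]
  rw [div_eq_iff (by contrapose! hq0; rw [Real.sqrt_eq_zero (by positivity)] at hq0; linear_combination hq0)]
  simp (disch := positivity) only [Real.mul_self_sqrt]
  ring
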